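/- Let X have mean 0 and variance 1, N standard Gaussian independent of X, and X_r = √r X + N. Then (1/r)·J_st(X_r) = 1 - (1+r)·E[(X - E[X | X_r])²], where J_st(X_r) = (1+r)·E[ρ_r(X_r)²] - 1 with ρ_r the score of X_r. -/

import Mathlib

open MeasureTheory ProbabilityTheory Real
open scoped ENNReal NNReal

/-! ### Auxiliary Gaussian moment lemmas -/

lemma integ_sq_gauss' : ∫ x : ℝ, x ^ 2 * rexp (-(1/2) * x ^ 2) = Real.sqrt (2 * π) := by
  have h0 : (fun x : ℝ => x ^ 2 * rexp (-(1/2) * x ^ 2))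
      = fun x : ℝ => |x| ^ 2 * rexp (-(1/2) * |x| ^ 2) := by
    funext x; rw [sq_abs]
  rw [h0, integral_comp_abs (f := fun x : ℝ => x ^ 2 * rexp (-(1/2) * x ^ 2))]
  have h1 : ∫ x in Set.Ioi (0:ℝ), x ^ 2 * rexp (-(1/2) * x ^ 2)
      = ∫ x in Set.Ioi (0:ℝ), x ^ (2:ℝ) * rexp (-(1/2) * x ^ (2:ℝ)) := by
    refine setIntegral_congr_fun measurableSet_Ioi (fun x hx => ?_)
    rw [← Real.rpow_natCast x 2]; norm_num
  rw [h1, integral_rpow_mul_exp_neg_mul_rpow (by norm_num) (by norm_num) (by norm_num)]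
  have hG : Real.Gamma (((2:ℝ) + 1) / 2) = Real.sqrt π / 2 := by
    have : ((2:ℝ) + 1) / 2 = 1/2 + 1 := by norm_num
    rw [this, Real.Gamma_add_one (by norm_num), Real.Gamma_one_half_eq]
    ring
  rw [hG]
  have h2 : ((1:ℝ)/2) ^ (-((2:ℝ) + 1) / 2) = 2 * Real.sqrt 2 := by
    rw [show ((1:ℝ)/2) = 2⁻¹ by norm_num, ← Real.rpow_neg_one (2:ℝ),
      ← Real.rpow_mul (by norm_num : (0:ℝ) ≤ 2),
      show (-1:ℝ) * (-((2:ℝ) + 1) / 2) = 1 + 1/2 by norm_num,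
      Real.rpow_add (by norm_num : (0:ℝ) < 2), Real.rpow_one,
      ← Real.sqrt_eq_rpow]
  rw [h2]
  rw [Real.sqrt_mul (by norm_num) π]
  ring

lemma pdf_sq_eq' (x : ℝ) :
    gaussianPDFReal 0 1 x * x ^ 2 = (Real.sqrt (2 * π))⁻¹ * (x ^ 2 * rexp (-(1/2) * x ^ 2)) := by
  simp only [gaussianPDFReal]
  push_cast
  rw [mul_one, mul_one, sub_zero]
  ring_nf

lemma gauss_sq_int' : Integrable (fun x : ℝ => x ^ 2) (gaussianReal 0 1) := by
  rw [gaussianReal_of_var_ne_zero 0 one_ne_zero]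
  have hpdf : gaussianPDF 0 1 = fun x => ((gaussianPDFReal 0 1 x).toNNReal : ℝ≥0∞) := by
    funext x; rfl
  rw [hpdf, integrable_withDensity_iff_integrable_smul
    ((measurable_gaussianPDFReal 0 1).real_toNNReal)]
  have : (fun x : ℝ => (gaussianPDFReal 0 1 x).toNNReal • x ^ 2 : ℝ → ℝ)
      = fun x : ℝ => (Real.sqrt (2 * π))⁻¹ * (x ^ 2 * rexp (-(1/2) * x ^ 2)) := by
    funext x
    rw [NNReal.smul_def, Real.coe_toNNReal _ (gaussianPDFReal_nonneg 0 1 x), smul_eq_mul,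
      pdf_sq_eq']
  rw [this]
  apply Integrable.const_mul
  have := integrable_rpow_mul_exp_neg_mul_sq (by norm_num : (0:ℝ) < 1/2) (by norm_num : (-1:ℝ) < 2)
  have h2 : (fun x : ℝ => x ^ (2:ℝ) * rexp (-(1/2) * x ^ 2))
      = fun x : ℝ => x ^ 2 * rexp (-(1/2) * x ^ 2) := by
    funext x; rw [← Real.rpow_natCast x 2]; norm_num
  rw [h2] at this; exact this

lemma gauss_sq_moment' : ∫ x, x ^ 2 ∂(gaussianReal 0 1) = 1 := by
  rw [gaussianReal_of_var_ne_zero 0 one_ne_zero]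
  have hpdf : gaussianPDF 0 1 = fun x => ((gaussianPDFReal 0 1 x).toNNReal : ℝ≥0∞) := rfl
  rw [hpdf, integral_withDensity_eq_integral_smul
    ((measurable_gaussianPDFReal 0 1).real_toNNReal) (fun x => x ^ 2)]
  have : (fun x : ℝ => (gaussianPDFReal 0 1 x).toNNReal • x ^ 2 : ℝ → ℝ)
      = fun x : ℝ => (Real.sqrt (2 * π))⁻¹ * (x ^ 2 * rexp (-(1/2) * x ^ 2)) := by
    funext x
    rw [NNReal.smul_def, Real.coe_toNNReal _ (gaussianPDFReal_nonneg 0 1 x), smul_eq_mul,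
      pdf_sq_eq']
  rw [this, integral_const_mul, integ_sq_gauss', inv_mul_cancel₀]
  positivity

/-! ### L² product integrability and orthogonality of conditional expectation -/

lemma l2_mul_integrable' {Ω : Type*} [MeasureSpace Ω] {f g : Ω → ℝ}
    (hf : MemLp f 2 ℙ) (hg : MemLp g 2 ℙ) :
    Integrable (fun ω => f ω * g ω) ℙ := by
  haveI : ENNReal.HolderTriple 2 2 1 := ⟨by simp [ENNReal.inv_two_add_inv_two]⟩
  have h := hg.smul hf (p := 2) (q := 2) (r := 1)
  rw [← memLp_one_iff_integrable]
  exact h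

lemma condexp_orth' {Ω : Type*} [MeasureSpace Ω] [IsProbabilityMeasure (ℙ : Measure Ω)]
    {m : MeasurableSpace Ω} (hm : m ≤ MeasureSpace.toMeasurableSpace)
    {X f : Ω → ℝ} (hX : MemLp X 2 ℙ) (hf : MemLp f 2 ℙ) (hfm : StronglyMeasurable[m] f) :
    ∫ ω, f ω * X ω ∂ℙ = ∫ ω, f ω * (ℙ[X|m]) ω ∂ℙ := by
  have hfX : Integrable (fun ω => f ω * X ω) ℙ := l2_mul_integrable' hf hX
  have h2 : ℙ[fun ω => f ω * X ω|m] =ᵐ[ℙ] fun ω => f ω * (ℙ[X|m]) ω :=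
    condExp_mul_of_stronglyMeasurable_left hfm hfX (hX.integrable one_le_two)
  have h1 : ∫ ω, (ℙ[fun ω => f ω * X ω|m]) ω ∂ℙ = ∫ ω, f ω * X ω ∂ℙ := integral_condExp hm
  rw [← h1]
  exact integral_congr_ae h2

/-- **Fisher information / MMSE identity in the Gaussian channel.** Let `X` have mean `0` and
variance `1`, `N` standard Gaussian independent of `X`, and `X_r = √r X + N`. With `ρ_r` the
score of `X_r` (satisfying `ρ_r(X_r) = √r E[X|X_r] - X_r` a.s.), the standardized Fisher
information `J_st(X_r) = (1+r)E[ρ_r(X_r)²] - 1` satisfies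
`(1/r)·J_st(X_r) = 1 - (1+r)·E[(X - E[X|X_r])²]`. -/
theorem standardized_fisher_eq_mmse
    {Ω : Type*} [MeasureSpace Ω] [IsProbabilityMeasure (ℙ : Measure Ω)]
    (X N : Ω → ℝ) (hXmeas : Measurable X) (hNmeas : Measurable N)
    (hindep : IndepFun X N ℙ)
    (hN : Measure.map N ℙ = gaussianReal 0 1)
    (hX2 : Integrable (fun ω => (X ω) ^ 2) ℙ)
    (hmean : ∫ ω, X ω ∂ℙ = 0) (hvar : ∫ ω, (X ω) ^ 2 ∂ℙ = 1)
    (r : ℝ) (hr : 0 < r)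
    (Xr : Ω → ℝ) (hXr : Xr = fun ω => Real.sqrt r * X ω + N ω)
    (ρ : ℝ → ℝ)
    (hρ2_int : Integrable (fun ω => (ρ (Xr ω)) ^ 2) ℙ)
    (hρ : (fun ω => ρ (Xr ω))
      =ᵐ[ℙ] fun ω =>
        Real.sqrt r * (ℙ[X | MeasurableSpace.comap Xr inferInstance]) ω - Xr ω) :
    (1 / r) * ((1 + r) * (∫ ω, (ρ (Xr ω)) ^ 2 ∂ℙ) - 1)
      = 1 - (1 + r) *
          ∫ ω, (X ω - (ℙ[X | MeasurableSpace.comap Xr inferInstance]) ω) ^ 2 ∂ℙ := by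
  have hXrmeas : Measurable Xr := by
    rw [hXr]; exact (measurable_const.mul hXmeas).add hNmeas
  have hN2 : Integrable (fun ω => (N ω) ^ 2) ℙ := by
    have h : Integrable (fun x : ℝ => x ^ 2) (Measure.map N ℙ) := by
      rw [hN]; exact gauss_sq_int'
    have := (integrable_map_measure (by fun_prop) hNmeas.aemeasurable).1 h
    exact this
  have hNNval : ∫ ω, (N ω) ^ 2 ∂ℙ = 1 := by
    have h := integral_map (μ := ℙ) hNmeas.aemeasurable
      (f := fun x : ℝ => x ^ 2) (by fun_prop)
    rw [hN, gauss_sq_moment'] at h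
    exact h.symm
  set m : MeasurableSpace Ω := MeasurableSpace.comap Xr inferInstance with hm_def
  have hm : m ≤ MeasureSpace.toMeasurableSpace := hXrmeas.comap_le
  set Y : Ω → ℝ := ℙ[X|m] with hY_def
  have hsr : Real.sqrt r ≠ 0 := by positivity
  have hsq : Real.sqrt r * Real.sqrt r = r := Real.mul_self_sqrt hr.le
  -- L² membership
  have hXL2 : MemLp X 2 ℙ := (memLp_two_iff_integrable_sq hXmeas.aestronglyMeasurable).2 hX2
  have hNL2 : MemLp N 2 ℙ := (memLp_two_iff_integrable_sq hNmeas.aestronglyMeasurable).2 hN2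
  have hXrL2 : MemLp Xr 2 ℙ := by
    rw [hXr]; exact (hXL2.const_mul _).add hNL2
  have hYsm : StronglyMeasurable[m] Y := stronglyMeasurable_condExp
  have hXrm : StronglyMeasurable[m] Xr := (Measurable.of_comap_le le_rfl).stronglyMeasurable
  have hsm : AEStronglyMeasurable[MeasureSpace.toMeasurableSpace] (fun ω => ρ (Xr ω)) ℙ := by
    refine AEStronglyMeasurable.congr ?_ hρ.symm
    exact ((stronglyMeasurable_const.mul (hYsm.mono hm)).sub
      hXrmeas.stronglyMeasurable).aestronglyMeasurable
  have hρL2 : MemLp (fun ω => ρ (Xr ω)) 2 ℙ := (memLp_two_iff_integrable_sq hsm).2 hρ2_int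
  have hgL2 : MemLp (fun ω => Real.sqrt r * Y ω - Xr ω) 2 ℙ := hρL2.ae_eq hρ
  have hYL2 : MemLp Y 2 ℙ := by
    have h : (fun ω => (Real.sqrt r)⁻¹ * ((Real.sqrt r * Y ω - Xr ω) + Xr ω)) = Y := by
      funext ω; field_simp; ring
    exact h ▸ ((hgL2.add hXrL2).const_mul _)
  -- integrability of products
  have hYX : Integrable (fun ω => Y ω * X ω) ℙ := l2_mul_integrable' hYL2 hXL2
  have hYY : Integrable (fun ω => Y ω * Y ω) ℙ := l2_mul_integrable' hYL2 hYL2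
  have hXrY : Integrable (fun ω => Xr ω * Y ω) ℙ := l2_mul_integrable' hXrL2 hYL2
  have hNX : Integrable (fun ω => N ω * X ω) ℙ := l2_mul_integrable' hNL2 hXL2
  have hNY : Integrable (fun ω => N ω * Y ω) ℙ := l2_mul_integrable' hNL2 hYL2
  have hXmY2 : Integrable (fun ω => (X ω - Y ω) ^ 2) ℙ :=
    (memLp_two_iff_integrable_sq (hXL2.sub hYL2).aestronglyMeasurable).1 (hXL2.sub hYL2)
  -- orthogonality
  have oYX : ∫ ω, Y ω * X ω ∂ℙ = ∫ ω, Y ω * Y ω ∂ℙ := condexp_orth' hm hXL2 hYL2 hYsm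
  have oXrX : ∫ ω, Xr ω * X ω ∂ℙ = ∫ ω, Xr ω * Y ω ∂ℙ := condexp_orth' hm hXL2 hXrL2 hXrm
  set A : ℝ := ∫ ω, Y ω * Y ω ∂ℙ with hA_def
  -- basic integrals
  have hNXval : ∫ ω, N ω * X ω ∂ℙ = 0 := by
    have h0 := hindep.integral_mul_eq_mul_integral hXmeas.aestronglyMeasurable hNmeas.aestronglyMeasurable
    have h1 : ∫ ω, N ω * X ω ∂ℙ = integral ℙ (X * N) :=
      integral_congr_ae (Filter.Eventually.of_forall fun ω => mul_comm _ _)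
    rw [h1, h0, show integral ℙ X = ∫ ω, X ω ∂ℙ from rfl, hmean, zero_mul]
  have hXrXval : ∫ ω, Xr ω * X ω ∂ℙ = Real.sqrt r := by
    have h : (fun ω => Xr ω * X ω) = fun ω => Real.sqrt r * (X ω) ^ 2 + N ω * X ω := by
      funext ω; rw [hXr]; ring
    rw [h, integral_add (hX2.const_mul _) hNX, integral_const_mul, hvar, hNXval]
    ring
  have hNYval : ∫ ω, N ω * Y ω ∂ℙ = Real.sqrt r - Real.sqrt r * A := by
    have h : (fun ω => N ω * Y ω)
        = fun ω => Xr ω * Y ω - Real.sqrt r * (Y ω * X ω) := by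
      funext ω; rw [hXr]; ring
    have hsub : Integrable (fun ω => Real.sqrt r * (Y ω * X ω)) ℙ := hYX.const_mul _
    rw [h, integral_sub hXrY hsub, integral_const_mul, ← oXrX, hXrXval, oYX]
  have hMval : ∫ ω, (X ω - Y ω) ^ 2 ∂ℙ = 1 - A := by
    have h : (fun ω => (X ω - Y ω) ^ 2)
        = fun ω => ((X ω) ^ 2 - 2 * (Y ω * X ω)) + Y ω * Y ω := by
      funext ω; ring
    have hI1 : Integrable (fun ω => (X ω) ^ 2 - 2 * (Y ω * X ω)) ℙ := by
      exact hX2.sub (hYX.const_mul 2)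
    have hI2 : Integrable (fun ω => 2 * (Y ω * X ω)) ℙ := hYX.const_mul 2
    rw [h, integral_add hI1 hYY, integral_sub hX2 hI2, integral_const_mul, hvar, oYX]
    ring
  -- main computation
  have hρval : ∫ ω, (ρ (Xr ω)) ^ 2 ∂ℙ = 1 - r * (1 - A) := by
    have h1 : (fun ω => (ρ (Xr ω)) ^ 2)
        =ᵐ[ℙ] fun ω => (Real.sqrt r * Y ω - Xr ω) ^ 2 := by
      filter_upwards [hρ] with ω h; rw [h]
    have h2 : (fun ω => (Real.sqrt r * Y ω - Xr ω) ^ 2)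
        = fun ω => (r * (X ω - Y ω) ^ 2 - 2 * Real.sqrt r * (N ω * Y ω))
            + (2 * Real.sqrt r * (N ω * X ω) + (N ω) ^ 2) := by
      funext ω; rw [hXr]
      linear_combination (Y ω - X ω) ^ 2 * hsq
    have hI1 : Integrable
        (fun ω => r * (X ω - Y ω) ^ 2 - 2 * Real.sqrt r * (N ω * Y ω)) ℙ := by
      exact (hXmY2.const_mul r).sub (hNY.const_mul _)
    have hI2 : Integrable
        (fun ω => 2 * Real.sqrt r * (N ω * X ω) + (N ω) ^ 2) ℙ := by
      exact (hNX.const_mul _).add hN2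
    have hI3 : Integrable (fun ω => r * (X ω - Y ω) ^ 2) ℙ := hXmY2.const_mul r
    have hI4 : Integrable (fun ω => 2 * Real.sqrt r * (N ω * Y ω)) ℙ := hNY.const_mul _
    have hI5 : Integrable (fun ω => 2 * Real.sqrt r * (N ω * X ω)) ℙ := hNX.const_mul _
    rw [integral_congr_ae h1, h2, integral_add hI1 hI2, integral_sub hI3 hI4,
      integral_add hI5 hN2, integral_const_mul, integral_const_mul, integral_const_mul,
      hMval, hNYval, hNXval, hNNval]
    linear_combination (2 * A - 2) * hsq
  rw [hρval, hMval]
  field_simp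
  ring
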